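/- Let N ≥ 2, let (τ_1,…,τ_N; ω_1,…,ω_N) be a Radau quadrature rule of order N, and let D‡ be the associated N×N matrix with entries D‡_{ij} = -(ω_j/ω_i) D_{ji}. Then for every real polynomial p of degree at most N−1, writing p = (p(τ_1),…,p(τ_N)), one has (D‡ p)_i = ṗ(τ_i) for 1 ≤ i ≤ N−1 and (D‡ p)_N = ṗ(τ_N) − p(1)/ω_N, where ṗ is the derivative of p. In particular, D‡ 1 = −(1/ω_N) e_N, where 1 is the all-ones vector and e_N is the N-th standard basis vector. -/

import Mathlib

open Polynomial Matrix

noncomputable section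

/-- The differentiation matrix associated with nodes `σ 0, σ 1, …, σ N`
(`σ 0` being the non-collocated point):  `D i j = L̇_j(σ (i+1))`,
where `L_j` is the `j`-th Lagrange basis polynomial of the nodes. -/
def diffMat (N : ℕ) (σ : Fin (N + 1) → ℝ) : Matrix (Fin N) (Fin (N + 1)) ℝ :=
  fun i j => (derivative (Lagrange.basis Finset.univ σ j)).eval (σ i.succ)

/-- The matrix `D‡` with entries `D‡_{ij} = -(ω_j/ω_i) D_{ji}`, the indices
`i, j` of `D` ranging over the collocation points `σ 1, …, σ N`. -/
def ddagMat (N : ℕ) (σ : Fin (N + 1) → ℝ) (ω : Fin N → ℝ) :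
    Matrix (Fin N) (Fin N) ℝ :=
  fun i j => -(ω j / ω i) * diffMat N σ j i.succ

/-- For a Radau quadrature rule of order `N ≥ 2`, the matrix
`D‡` acts on the values `(p(τ_1),…,p(τ_N))` of a polynomial `p` of degree at
most `N-1` by `(D‡p)_i = ṗ(τ_i)` for `i < N` and `(D‡p)_N = ṗ(τ_N) − p(1)/ω_N`;
in particular `D‡𝟙 = −(1/ω_N) e_N`. -/
theorem ddag_differentiation (N : ℕ) (hN : 2 ≤ N) (τ ω : Fin N → ℝ)
    (hmono : StrictMono τ)
    (hfirst : -1 < τ ⟨0, by omega⟩)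
    (hlast : τ ⟨N - 1, by omega⟩ = 1)
    (hω : ∀ i, 0 < ω i)
    (hquad : ∀ q : Polynomial ℝ, q.degree ≤ (2 * N - 2 : ℕ) →
      ∫ t in (-1:ℝ)..1, q.eval t = ∑ i, ω i * q.eval (τ i)) :
    (∀ p : Polynomial ℝ, p.degree ≤ (N - 1 : ℕ) →
      (∀ i : Fin N, (i : ℕ) < N - 1 →
        (ddagMat N (Fin.cons (-1) τ) ω).mulVec (fun j => p.eval (τ j)) i =
          (derivative p).eval (τ i)) ∧
      (ddagMat N (Fin.cons (-1) τ) ω).mulVec (fun j => p.eval (τ j)) ⟨N - 1, by omega⟩ =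
        (derivative p).eval (τ ⟨N - 1, by omega⟩) - p.eval 1 / ω ⟨N - 1, by omega⟩) ∧
    (ddagMat N (Fin.cons (-1) τ) ω).mulVec (fun _ => 1) =
      fun i => if i = (⟨N - 1, by omega⟩ : Fin N) then -(1 / ω ⟨N - 1, by omega⟩) else 0 := by
  set σ : Fin (N+1) → ℝ := Fin.cons (-1) τ with hσdef
  have hσmono : StrictMono σ := by
    refine Fin.strictMono_iff_lt_succ.mpr fun i => ?_
    simp only [hσdef, Fin.cons_succ]
    rcases Nat.eq_zero_or_pos i.val with h0 | hpos
    · have h : i.castSucc = 0 := by ext; simpa using h0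
      rw [h, Fin.cons_zero]
      exact lt_of_lt_of_le hfirst (hmono.monotone (by simp [Fin.le_def, h0]))
    · have h : i.castSucc = Fin.succ ⟨i.val - 1, by omega⟩ := by ext; simp; omega
      rw [h, Fin.cons_succ]
      exact hmono (by simp [Fin.lt_def]; omega)
  have hσinj : Function.Injective σ := hσmono.injective
  set lastIdx : Fin N := ⟨N - 1, by omega⟩ with hlastIdx
  have hτσ : ∀ j : Fin N, τ j = σ j.succ := fun j => by simp [hσdef]
  have hone : (1:ℝ) = σ (Fin.last N) := by
    rw [← hlast, hτσ]
    congr 1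
    ext; simp [hlastIdx]; omega
  -- the key computation
  have key : ∀ (p : Polynomial ℝ), p.degree ≤ (N-1 : ℕ) → ∀ i : Fin N,
      (ddagMat N σ ω).mulVec (fun j => p.eval (τ j)) i =
        (derivative p).eval (τ i) - (if i = lastIdx then p.eval 1 / ω i else 0) := by
    intro p hp i
    set L : Polynomial ℝ := Lagrange.basis Finset.univ σ i.succ with hL
    set q : Polynomial ℝ := derivative (L * p) with hq
    have hpnd : p.natDegree ≤ N - 1 := natDegree_le_iff_degree_le.mpr hp
    have hLnd : L.natDegree = N := by
      rw [hL, Lagrange.natDegree_basis hσinj.injOn (Finset.mem_univ _)]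
      simp
    have hqdeg : q.degree ≤ (2 * N - 2 : ℕ) := by
      refine degree_le_natDegree.trans ?_
      have h1 : q.natDegree ≤ (L * p).natDegree - 1 := natDegree_derivative_le _
      have h2 : (L * p).natDegree ≤ L.natDegree + p.natDegree := natDegree_mul_le
      have h3 : q.natDegree ≤ 2 * N - 2 := by omega
      exact_mod_cast Nat.cast_le.mpr h3
    have hint : ∫ t in (-1:ℝ)..1, q.eval t = (L*p).eval 1 - (L*p).eval (-1) := by
      apply intervalIntegral.integral_eq_sub_of_hasDerivAt (f := fun x => (L*p).eval x)
      · intro x _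
        rw [hq]; exact (L*p).hasDerivAt x
      · exact (q.continuous).intervalIntegrable _ _
    have hLτ : ∀ j : Fin N, L.eval (τ j) = if j = i then 1 else 0 := by
      intro j
      rw [hτσ, hL]
      rcases eq_or_ne j i with rfl | hne
      · simp [Lagrange.eval_basis_self hσinj.injOn (Finset.mem_univ _)]
      · rw [if_neg hne]
        exact Lagrange.eval_basis_of_ne (by simp [Fin.succ_inj, Ne.symm hne])
          (Finset.mem_univ _)
    have hLm1 : L.eval (-1) = 0 := by
      have : (-1:ℝ) = σ 0 := by simp [hσdef]
      rw [this, hL]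
      exact Lagrange.eval_basis_of_ne (Fin.succ_ne_zero i) (Finset.mem_univ _)
    have hL1 : L.eval 1 = if i = lastIdx then 1 else 0 := by
      conv_lhs => rw [hone]
      rw [hL]
      rcases eq_or_ne i lastIdx with rfl | hne
      · have : Fin.succ lastIdx = Fin.last N := by ext; simp [hlastIdx]; omega
        rw [if_pos rfl, this]
        exact Lagrange.eval_basis_self hσinj.injOn (Finset.mem_univ _)
      · rw [if_neg hne]
        refine Lagrange.eval_basis_of_ne ?_ (Finset.mem_univ _)
        intro h
        apply hne
        have := congrArg Fin.val h
        simp [Fin.val_succ] at this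
        ext; simp [hlastIdx]; omega
    have hq' := hquad q hqdeg
    rw [hint] at hq'
    have hqev : ∀ j : Fin N, q.eval (τ j) =
        (derivative L).eval (τ j) * p.eval (τ j) + L.eval (τ j) * (derivative p).eval (τ j) := by
      intro j; rw [hq, derivative_mul]; simp
    have hsum : ∑ j, ω j * ((derivative L).eval (τ j) * p.eval (τ j))
        = (if i = lastIdx then p.eval 1 else 0) - ω i * (derivative p).eval (τ i) := by
      have e1 : ∑ j, ω j * q.eval (τ j)
          = ∑ j, ω j * ((derivative L).eval (τ j) * p.eval (τ j))
            + ω i * (derivative p).eval (τ i) := by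
        simp_rw [hqev, mul_add, Finset.sum_add_distrib]
        congr 1
        have h4 : ∀ j : Fin N, ω j * (L.eval (τ j) * (derivative p).eval (τ j))
            = if j = i then ω i * (derivative p).eval (τ i) else 0 := by
          intro j; rw [hLτ]
          rcases eq_or_ne j i with rfl | h
          · simp
          · simp [h]
        rw [Finset.sum_congr rfl (fun j _ => h4 j), Finset.sum_ite_eq' Finset.univ i]
        simp
      rw [e1] at hq'
      rw [eval_mul, eval_mul, hLm1, hL1, ite_mul, one_mul, zero_mul] at hq'
      rcases eq_or_ne i lastIdx with h | h
      · simp only [if_pos h] at hq' ⊢; linarith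
      · simp only [if_neg h] at hq' ⊢; linarith
    -- now compute the mulVec entry
    have hωi := (hω i).ne'
    simp only [Matrix.mulVec, dotProduct, ddagMat, diffMat]
    have e2 : ∀ j : Fin N, -(ω j / ω i) * (derivative L).eval (σ j.succ) * p.eval (τ j)
        = -(ω i)⁻¹ * (ω j * ((derivative L).eval (τ j) * p.eval (τ j))) := by
      intro j; rw [← hτσ, div_eq_mul_inv]; ring
    rw [Finset.sum_congr rfl (fun j _ => e2 j), ← Finset.mul_sum, hsum]
    rcases eq_or_ne i lastIdx with h | h
    · simp only [if_pos h]
      field_simp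
      try ring
    · simp only [if_neg h]
      field_simp
      try ring
  refine ⟨fun p hp => ⟨fun i hi => ?_, ?_⟩, ?_⟩
  · rw [key p hp i, if_neg (by intro h; rw [h] at hi; simp [hlastIdx] at hi), sub_zero]
  · rw [key p hp lastIdx, if_pos rfl]
  · funext i
    have h1 : ((fun _ : Fin N => (1:ℝ))) = fun j => (1 : Polynomial ℝ).eval (τ j) := by
      funext j; simp
    rw [h1, key 1 (by simp) i]
    rcases eq_or_ne i lastIdx with rfl | hne
    · simp
    · simp [hne]
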